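/- Let G be a transition graph with n ≥ 1 vertices and a label universum of size m ≥ 1, and let ε > 0 be a real number. If the family F(G) has the ε-separability property, then |F(G)| ≤ m·n^(3/ε) + m^(6/ε), where the powers are real powers. -/

import Mathlib

structure TransitionGraph (V E U : Type*) where
  src : E → V
  tgt : E → V
  s : V
  t : V
  lab : E → Option U

namespace TransitionGraph

variable {V E U : Type*}

def IsSTPath (G : TransitionGraph V E U) (P : List E) : Prop :=
  List.Chain' (fun e f => G.tgt e = G.src f) P ∧
    ((P = [] ∧ G.s = G.t) ∨
      ∃ h : P ≠ [], G.src (P.head h) = G.s ∧ G.tgt (P.getLast h) = G.t)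

def labelSet [DecidableEq U] (G : TransitionGraph V E U) (P : List E) : Finset U :=
  (P.filterMap G.lab).toFinset

def labelFamily [DecidableEq U] (G : TransitionGraph V E U) : Set (Finset U) :=
  {S | ∃ P : List E, G.IsSTPath P ∧ G.labelSet P = S}

end TransitionGraph

/-- The `ε`-separability property for a family of finite sets. -/
def SepProperty {α : Type*} [DecidableEq α] (ε : ℝ) (F : Set (Finset α)) : Prop :=
  ∀ S₁ ∈ F, ∀ S₂ ∈ F, S₁ ≠ S₂ →
    (6 : ℝ) ≤ ε * (max S₁.card S₂.card : ℕ) →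
    ε * (max S₁.card S₂.card : ℕ) < ((symmDiff S₁ S₂).card : ℝ)

namespace TransitionGraph

variable {V E U : Type*} (G : TransitionGraph V E U)

def Seg (u v : V) (P : List E) : Prop :=
  List.Chain' (fun e f => G.tgt e = G.src f) P ∧
    ((P = [] ∧ u = v) ∨
      ∃ h : P ≠ [], G.src (P.head h) = u ∧ G.tgt (P.getLast h) = v)

lemma isSTPath_iff {P : List E} : G.IsSTPath P ↔ G.Seg G.s G.t P := Iff.rfl

variable {G}

lemma Seg.append {u v w : V} {P Q : List E} (hP : G.Seg u v P) (hQ : G.Seg v w Q) :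
    G.Seg u w (P ++ Q) := by
  obtain ⟨cP, hP⟩ := hP
  obtain ⟨cQ, hQ⟩ := hQ
  rcases hP with ⟨rfl, rfl⟩ | ⟨hne, hsrc, htgt⟩
  · simpa using ⟨cQ, hQ⟩
  rcases hQ with ⟨rfl, rfl⟩ | ⟨hneQ, hsrcQ, htgtQ⟩
  · simpa using ⟨cP, Or.inr ⟨hne, hsrc, htgt⟩⟩
  have hPQ : P ++ Q ≠ [] := by simp [hne]
  refine ⟨?_, Or.inr ⟨hPQ, ?_, ?_⟩⟩
  · rw [List.Chain', List.isChain_append]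
    refine ⟨cP, cQ, ?_⟩
    intro x hx y hy
    rw [List.getLast?_eq_getLast hne] at hx
    rw [List.head?_eq_head hneQ] at hy
    simp only [Option.mem_def, Option.some.injEq] at hx hy
    subst hx; subst hy
    rw [htgt, hsrcQ]
  · have h2 : (P ++ Q).head hPQ = P.head hne := by
      have := List.head?_eq_head hPQ
      rw [List.head?_append, List.head?_eq_head hne] at this
      exact (Option.some_inj.mp this.symm)
    rw [h2, hsrc]
  · have h1 : (P ++ Q).getLast? = Q.getLast? := by
      rw [List.getLast?_append, List.getLast?_eq_getLast hneQ]; rfl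
    have h2 := List.getLast?_eq_getLast hPQ
    rw [h1, List.getLast?_eq_getLast hneQ] at h2
    rw [show (P++Q).getLast hPQ = Q.getLast hneQ from Option.some_inj.mp h2.symm, htgtQ]

end TransitionGraph

namespace TransitionGraph
variable {V E U : Type*} {G : TransitionGraph V E U}

lemma head_take_eq {P : List E} {i : ℕ} (hA : P.take i ≠ []) (hP : P ≠ []) :
    (P.take i).head hA = P.head hP := by
  have e1 : ((P.take i) ++ (P.drop i)).head? = P.head? := by rw [List.take_append_drop]
  rw [List.head?_append, List.head?_eq_head hA, List.head?_eq_head hP] at e1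
  exact Option.some_inj.mp (by simpa using e1)

lemma head_drop_eq {P : List E} {i : ℕ} (hA : P.take i = []) (hB : P.drop i ≠ [])
    (hP : P ≠ []) : (P.drop i).head hB = P.head hP := by
  have e1 : ((P.take i) ++ (P.drop i)).head? = P.head? := by rw [List.take_append_drop]
  rw [hA, List.nil_append, List.head?_eq_head hB, List.head?_eq_head hP] at e1
  exact Option.some_inj.mp e1

lemma getLast_drop_eq {P : List E} {i : ℕ} (hB : P.drop i ≠ []) (hP : P ≠ []) :
    (P.drop i).getLast hB = P.getLast hP := by
  have e1 : ((P.take i) ++ (P.drop i)).getLast? = P.getLast? := by rw [List.take_append_drop]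
  rw [List.getLast?_append, List.getLast?_eq_getLast hB, List.getLast?_eq_getLast hP] at e1
  exact Option.some_inj.mp (by simpa using e1)

lemma getLast_take_eq {P : List E} {i : ℕ} (hB : P.drop i = []) (hA : P.take i ≠ [])
    (hP : P ≠ []) : (P.take i).getLast hA = P.getLast hP := by
  have e1 : ((P.take i) ++ (P.drop i)).getLast? = P.getLast? := by rw [List.take_append_drop]
  rw [hB, List.append_nil, List.getLast?_eq_getLast hA, List.getLast?_eq_getLast hP] at e1
  exact Option.some_inj.mp e1

variable (G) in
def cutV (u : V) (A : List E) : V := A.getLast?.elim u G.tgt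

@[simp] lemma cutV_nil (u : V) : G.cutV u ([] : List E) = u := rfl

lemma cutV_ne {u : V} {A : List E} (h : A ≠ []) : G.cutV u A = G.tgt (A.getLast h) := by
  rw [cutV, List.getLast?_eq_getLast h]; rfl

lemma seg_nil (u : V) : G.Seg u u ([] : List E) := ⟨List.isChain_nil, Or.inl ⟨rfl, rfl⟩⟩

lemma Seg.take {u w : V} {P : List E} (h : G.Seg u w P) (i : ℕ) :
    G.Seg u (G.cutV u (P.take i)) (P.take i) := by
  obtain ⟨hc, hd⟩ := h
  by_cases hA : P.take i = []
  · rw [hA]; exact seg_nil u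
  have hchain : List.Chain' (fun e f => G.tgt e = G.src f) (P.take i) := by
    rw [← List.take_append_drop i P, List.Chain', List.isChain_append] at hc
    exact hc.1
  have hPne : P ≠ [] := by intro h; simp [h] at hA
  rcases hd with ⟨h1, _⟩ | ⟨hne, hsrc, _⟩
  · exact absurd h1 hPne
  refine ⟨hchain, Or.inr ⟨hA, ?_, (cutV_ne hA).symm⟩⟩
  rw [head_take_eq hA hne, hsrc]

lemma Seg.drop {u w : V} {P : List E} (h : G.Seg u w P) (i : ℕ) :
    G.Seg (G.cutV u (P.take i)) w (P.drop i) := by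
  obtain ⟨hc, hd⟩ := h
  have hc' := hc
  rw [← List.take_append_drop i P, List.Chain', List.isChain_append] at hc'
  by_cases hB : P.drop i = []
  · rw [hB]
    have hAP : P.take i = P := by
      conv_rhs => rw [← List.take_append_drop i P]
      rw [hB, List.append_nil]
    rcases hd with ⟨h1, h2⟩ | ⟨hne, hsrc, htgt⟩
    · rw [hAP, h1]; simpa [h2] using seg_nil w
    · have hAne : P.take i ≠ [] := by rw [hAP]; exact hne
      have : G.cutV u (P.take i) = w := by
        rw [cutV_ne hAne, getLast_take_eq hB hAne hne, htgt]
      rw [this]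
      exact seg_nil w
  have hPne : P ≠ [] := by intro h; simp [h] at hB
  rcases hd with ⟨h1, _⟩ | ⟨hne, hsrc, htgt⟩
  · exact absurd h1 hPne
  refine ⟨hc'.2.1, Or.inr ⟨hB, ?_, ?_⟩⟩
  · by_cases hA : P.take i = []
    · rw [hA, cutV_nil]
      rw [head_drop_eq hA hB hne, hsrc]
    · rw [cutV_ne hA]
      exact (hc'.2.2 ((P.take i).getLast hA) (by simp [List.getLast?_eq_getLast hA])
        ((P.drop i).head hB) (by simp [List.head?_eq_head hB])).symm
  · rw [getLast_drop_eq hB hne, htgt]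

end TransitionGraph

namespace TransitionGraph
variable {V E U : Type*} [DecidableEq U] {G : TransitionGraph V E U}

lemma labelSet_append (P Q : List E) :
    G.labelSet (P ++ Q) = G.labelSet P ∪ G.labelSet Q := by
  simp [labelSet, List.filterMap_append]

lemma card_labelSet_le_length (P : List E) : (G.labelSet P).card ≤ P.length :=
  (List.toFinset_card_le _).trans (List.length_filterMap_le _ _)

lemma labelSet_take_subset (P : List E) (i : ℕ) :
    G.labelSet (P.take i) ⊆ G.labelSet P := by
  conv_rhs => rw [← List.take_append_drop i P]
  rw [labelSet_append]
  exact Finset.subset_union_left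

lemma labelSet_drop_subset (P : List E) (i : ℕ) :
    G.labelSet (P.drop i) ⊆ G.labelSet P := by
  conv_rhs => rw [← List.take_append_drop i P]
  rw [labelSet_append]
  exact Finset.subset_union_right

lemma card_labelSet_take_succ (P : List E) (i : ℕ) :
    (G.labelSet (P.take (i + 1))).card ≤ (G.labelSet (P.take i)).card + 1 := by
  rw [List.take_succ, labelSet_append]
  refine (Finset.card_union_le _ _).trans ?_
  have h1 : (G.labelSet (P[i]?.toList)).card ≤ 1 := by
    refine (card_labelSet_le_length _).trans ?_
    cases P[i]? <;> simp
  omega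

variable (G) in
noncomputable def idx (P : List E) (r : ℕ) : ℕ :=
  sInf {i | r ≤ (G.labelSet (P.take i)).card}

lemma idx_zero (P : List E) : G.idx P 0 = 0 :=
  Nat.sInf_eq_zero.mpr (Or.inl (by simp))

lemma card_labelSet_take_idx {P : List E} {r : ℕ} (hr : r ≤ (G.labelSet P).card) :
    (G.labelSet (P.take (G.idx P r))).card = r := by
  have hne : {i | r ≤ (G.labelSet (P.take i)).card}.Nonempty :=
    ⟨P.length, by simpa [List.take_length] using hr⟩
  have hmem := Nat.sInf_mem hne
  rw [Set.mem_setOf_eq] at hmem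
  refine le_antisymm ?_ hmem
  rcases h : G.idx P r with _ | j
  · simp [labelSet]
  · have hlt : j < G.idx P r := by omega
    rw [idx] at hlt
    have hj := Nat.notMem_of_lt_sInf hlt
    rw [Set.mem_setOf_eq, not_le] at hj
    have := card_labelSet_take_succ (G := G) P j
    omega

lemma idx_mono {P : List E} {r r' : ℕ} (h : r ≤ r') (hr' : r' ≤ (G.labelSet P).card) :
    G.idx P r ≤ G.idx P r' := by
  apply Nat.sInf_le
  rw [Set.mem_setOf_eq]
  calc r ≤ r' := h
    _ ≤ _ := by
        have hne : {i | r' ≤ (G.labelSet (P.take i)).card}.Nonempty :=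
          ⟨P.length, by simpa [List.take_length] using hr'⟩
        have := Nat.sInf_mem hne
        rwa [Set.mem_setOf_eq] at this

end TransitionGraph

namespace TransitionGraph
variable {V E U : Type*} [DecidableEq U] {G : TransitionGraph V E U}

lemma decomp (P : List E) (a b : ℕ) (hab : a ≤ b) :
    P.take b = P.take a ++ (P.take b).drop a := by
  conv_lhs => rw [← List.take_append_drop a (P.take b)]
  rw [List.take_take, min_eq_left hab]

lemma prefix_incl {ε : ℝ} (hε : 0 < ε) (hsep : SepProperty ε G.labelFamily)
    {P₁ P₂ : List E} (h₁ : G.Seg G.s G.t P₁) (h₂ : G.Seg G.s G.t P₂)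
    {w : ℕ}
    (hw₁ : (G.labelSet P₁).card = w) (hw₂ : (G.labelSet P₂).card = w)
    (h6 : (6 : ℝ) ≤ ε * w)
    (hcp : ∀ j, 1 ≤ j → j ≤ (w - 1) / ⌈ε * w / 3⌉₊ →
      G.cutV G.s (P₁.take (G.idx P₁ (j * ⌈ε * w / 3⌉₊))) =
      G.cutV G.s (P₂.take (G.idx P₂ (j * ⌈ε * w / 3⌉₊)))) :
    G.labelSet P₁ ⊆ G.labelSet P₂ := by
  set d : ℕ := ⌈ε * w / 3⌉₊ with hd
  set Km : ℕ := (w - 1) / d with hK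
  have hεw : (0:ℝ) < ε * w := lt_of_lt_of_le (by norm_num) h6
  have hw1 : 1 ≤ w := by
    by_contra h
    have hw0 : w = 0 := by omega
    rw [hw0] at hεw; simp at hεw
  have hd1 : 1 ≤ d := by
    rw [hd]
    exact Nat.one_le_ceil_iff.mpr (by positivity)
  have hKd : Km * d ≤ w - 1 := Nat.div_mul_le_self _ _
  have hKd' : w ≤ (Km + 1) * d := by
    have e : d * Km + (w-1) % d = w - 1 := Nat.div_add_mod (w-1) d
    have hmod : (w-1) % d < d := Nat.mod_lt _ (by omega)
    calc w = d * Km + (w-1) % d + 1 := by omega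
      _ ≤ d * Km + d := by omega
      _ = (Km + 1) * d := by ring
  have h2d : 2 * (d:ℝ) ≤ ε * w := by
    have hc1 : (d:ℝ) < ε * w / 3 + 1 := by
      rw [hd]; exact Nat.ceil_lt_add_one (by positivity)
    linarith
  have hS₂mem : G.labelSet P₂ ∈ G.labelFamily := ⟨P₂, h₂, rfl⟩
  -- key separability consequence
  have close : ∀ T ∈ G.labelFamily, (symmDiff T (G.labelSet P₂)).card ≤ 2*d →
      T = G.labelSet P₂ := by
    intro T hT hcard
    by_contra hne
    have hmax : (w:ℝ) ≤ ((max T.card (G.labelSet P₂).card : ℕ) : ℝ) := by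
      exact_mod_cast le_max_of_le_right (le_of_eq hw₂.symm)
    have hmul : ε * w ≤ ε * ((max T.card (G.labelSet P₂).card : ℕ) : ℝ) :=
      mul_le_mul_of_nonneg_left hmax hε.le
    have hstrict := hsep T hT _ hS₂mem hne (h6.trans hmul)
    have hc : ((symmDiff T (G.labelSet P₂)).card : ℝ) ≤ 2*d := by exact_mod_cast hcard
    linarith
  have hcard₁ : ∀ r, r ≤ w → (G.labelSet (P₁.take (G.idx P₁ r))).card = r := by
    intro r hr; exact card_labelSet_take_idx (by rw [hw₁]; exact hr)
  have hcard₂ : ∀ r, r ≤ w → (G.labelSet (P₂.take (G.idx P₂ r))).card = r := by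
    intro r hr; exact card_labelSet_take_idx (by rw [hw₂]; exact hr)
  -- the inductive claim
  have main : ∀ j, j ≤ Km → G.labelSet (P₁.take (G.idx P₁ (j*d))) ⊆ G.labelSet P₂ := by
    intro j
    induction j with
    | zero =>
      intro _
      rw [Nat.zero_mul, idx_zero]
      simp [labelSet]
    | succ j ih =>
      intro hj1
      have hj : j ≤ Km := by omega
      have ihj := ih hj
      have hjd : j*d ≤ w := by
        calc j*d ≤ Km*d := Nat.mul_le_mul_right d hj
          _ ≤ w := by omega
      have hjd' : (j+1)*d ≤ w := by
        calc (j+1)*d ≤ Km*d := Nat.mul_le_mul_right d hj1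
          _ ≤ w := by omega
      have hab₁ : G.idx P₁ (j*d) ≤ G.idx P₁ ((j+1)*d) :=
        idx_mono (Nat.mul_le_mul_right d (by omega)) (by rw [hw₁]; exact hjd')
      have hab₂ : G.idx P₂ (j*d) ≤ G.idx P₂ ((j+1)*d) :=
        idx_mono (Nat.mul_le_mul_right d (by omega)) (by rw [hw₂]; exact hjd')
      set a₁ := G.idx P₁ (j*d) with ha₁
      set b₁ := G.idx P₁ ((j+1)*d) with hb₁
      set a₂ := G.idx P₂ (j*d) with ha₂
      set b₂ := G.idx P₂ ((j+1)*d) with hb₂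
      -- segments
      have s₂a : G.Seg G.s (G.cutV G.s (P₂.take a₂)) (P₂.take a₂) := h₂.take a₂
      have s₂b : G.Seg (G.cutV G.s (P₂.take b₂)) G.t (P₂.drop b₂) := h₂.drop b₂
      have smid : G.Seg (G.cutV G.s ((P₁.take b₁).take a₁)) (G.cutV G.s (P₁.take b₁))
          ((P₁.take b₁).drop a₁) := (h₁.take b₁).drop a₁
      rw [List.take_take, min_eq_left hab₁] at smid
      have hcpj : G.cutV G.s (P₁.take a₁) = G.cutV G.s (P₂.take a₂) := by
        rcases Nat.eq_zero_or_pos j with rfl | hj0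
        · rw [ha₁, ha₂, Nat.zero_mul, idx_zero, idx_zero]; simp
        · exact hcp j hj0 hj
      have hcpj' : G.cutV G.s (P₁.take b₁) = G.cutV G.s (P₂.take b₂) :=
        hcp (j+1) (by omega) hj1
      rw [hcpj, hcpj'] at smid
      have hR : G.Seg G.s G.t (P₂.take a₂ ++ ((P₁.take b₁).drop a₁ ++ P₂.drop b₂)) :=
        s₂a.append (smid.append s₂b)
      set R : List E := P₂.take a₂ ++ ((P₁.take b₁).drop a₁ ++ P₂.drop b₂) with hRdef
      have hTmem : G.labelSet R ∈ G.labelFamily := ⟨R, hR, rfl⟩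
      set M := G.labelSet ((P₁.take b₁).drop a₁) with hM
      have hTeq : G.labelSet R = G.labelSet (P₂.take a₂) ∪ (M ∪ G.labelSet (P₂.drop b₂)) := by
        rw [hRdef, labelSet_append, labelSet_append]
      have hA1 : G.labelSet (P₁.take a₁) ∪ M = G.labelSet (P₁.take b₁) := by
        conv_rhs => rw [decomp P₁ a₁ b₁ hab₁]
        rw [labelSet_append]
      have hA2sub : G.labelSet (P₂.take a₂) ⊆ G.labelSet (P₂.take b₂) := by
        rw [decomp P₂ a₂ b₂ hab₂, labelSet_append]
        exact Finset.subset_union_left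
      have hS2eq : G.labelSet P₂ = G.labelSet (P₂.take b₂) ∪ G.labelSet (P₂.drop b₂) := by
        conv_lhs => rw [← List.take_append_drop b₂ P₂]
        rw [labelSet_append]
      -- symm diff subset
      have hsub : symmDiff (G.labelSet R) (G.labelSet P₂) ⊆
          (M \ G.labelSet (P₁.take a₁)) ∪
            (G.labelSet (P₂.take b₂) \ G.labelSet (P₂.take a₂)) := by
        rw [symmDiff_def]
        intro x hx
        simp only [Finset.sup_eq_union, Finset.mem_union, Finset.mem_sdiff] at hx ⊢
        rcases hx with ⟨hxT, hxS⟩ | ⟨hxS, hxT⟩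
        · left
          rw [hTeq] at hxT
          simp only [Finset.mem_union] at hxT
          rcases hxT with h | h | h
          · exact absurd (labelSet_take_subset P₂ a₂ h) hxS
          · exact ⟨h, fun hc => hxS (ihj hc)⟩
          · exact absurd (labelSet_drop_subset P₂ b₂ h) hxS
        · right
          have hxb : x ∈ G.labelSet (P₂.take b₂) := by
            rw [hS2eq] at hxS
            rcases Finset.mem_union.mp hxS with h | h
            · exact h
            · exact absurd (by rw [hTeq]; exact Finset.mem_union_right _ (Finset.mem_union_right _ h)) hxT
          refine ⟨hxb, fun hc => hxT ?_⟩
          rw [hTeq]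
          exact Finset.mem_union_left _ hc
      have hsub1 : G.labelSet (P₁.take a₁) ⊆ G.labelSet (P₁.take b₁) := by
        rw [← hA1]; exact Finset.subset_union_left
      have hMcard : (M \ G.labelSet (P₁.take a₁)).card = d := by
        have e1 : M \ G.labelSet (P₁.take a₁)
            = G.labelSet (P₁.take b₁) \ G.labelSet (P₁.take a₁) := by
          rw [← hA1, Finset.union_sdiff_left]
        rw [e1, Finset.card_sdiff_of_subset hsub1, hb₁, ha₁, hcard₁ _ hjd', hcard₁ _ hjd]
        rw [add_mul, one_mul]; omega
      have hC2card : (G.labelSet (P₂.take b₂) \ G.labelSet (P₂.take a₂)).card = d := by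
        rw [Finset.card_sdiff_of_subset hA2sub, hb₂, ha₂, hcard₂ _ hjd', hcard₂ _ hjd]
        rw [add_mul, one_mul]; omega
      have hcardΔ : (symmDiff (G.labelSet R) (G.labelSet P₂)).card ≤ 2*d := by
        refine (Finset.card_le_card hsub).trans ((Finset.card_union_le _ _).trans ?_)
        rw [hMcard, hC2card]; omega
      have hTeq2 := close _ hTmem hcardΔ
      rw [← hA1]
      apply Finset.union_subset ihj
      have hMsub : M ⊆ G.labelSet R := by
        rw [hTeq]
        exact (Finset.subset_union_left).trans (Finset.subset_union_right)
      rw [hTeq2] at hMsub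
      exact hMsub
  -- final step
  have hKmd : Km*d ≤ w := by omega
  have hab₁ : G.idx P₁ (Km*d) ≤ P₁.length := by
    apply Nat.sInf_le
    rw [Set.mem_setOf_eq, List.take_length, hw₁]
    exact hKmd
  set a₁ := G.idx P₁ (Km*d) with ha₁
  set a₂ := G.idx P₂ (Km*d) with ha₂
  have s₂a : G.Seg G.s (G.cutV G.s (P₂.take a₂)) (P₂.take a₂) := h₂.take a₂
  have s₁b : G.Seg (G.cutV G.s (P₁.take a₁)) G.t (P₁.drop a₁) := h₁.drop a₁
  have hcpK : G.cutV G.s (P₁.take a₁) = G.cutV G.s (P₂.take a₂) := by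
    rcases Nat.eq_zero_or_pos Km with hK0 | hK0
    · rw [ha₁, ha₂, hK0, Nat.zero_mul, idx_zero, idx_zero]; simp
    · exact hcp Km hK0 le_rfl
  rw [hcpK] at s₁b
  have hR : G.Seg G.s G.t (P₂.take a₂ ++ P₁.drop a₁) := s₂a.append s₁b
  set R : List E := P₂.take a₂ ++ P₁.drop a₁ with hRdef
  have hTmem : G.labelSet R ∈ G.labelFamily := ⟨R, hR, rfl⟩
  set M := G.labelSet (P₁.drop a₁) with hM
  have hTeq : G.labelSet R = G.labelSet (P₂.take a₂) ∪ M := by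
    rw [hRdef, labelSet_append]
  have hA1 : G.labelSet (P₁.take a₁) ∪ M = G.labelSet P₁ := by
    conv_rhs => rw [← List.take_append_drop a₁ P₁]
    rw [labelSet_append]
  have ihK := main Km le_rfl
  have hsub1 : G.labelSet (P₁.take a₁) ⊆ G.labelSet P₁ := labelSet_take_subset _ _
  have hsub2 : G.labelSet (P₂.take a₂) ⊆ G.labelSet P₂ := labelSet_take_subset _ _
  have hwKd : w - Km*d ≤ d := by
    have : w ≤ Km*d + d := by
      calc w ≤ (Km+1)*d := hKd'
        _ = Km*d + d := by ring
    omega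
  have hsub : symmDiff (G.labelSet R) (G.labelSet P₂) ⊆
      (M \ G.labelSet (P₁.take a₁)) ∪ (G.labelSet P₂ \ G.labelSet (P₂.take a₂)) := by
    rw [symmDiff_def]
    intro x hx
    simp only [Finset.sup_eq_union, Finset.mem_union, Finset.mem_sdiff] at hx ⊢
    rcases hx with ⟨hxT, hxS⟩ | ⟨hxS, hxT⟩
    · left
      rw [hTeq] at hxT
      rcases Finset.mem_union.mp hxT with h | h
      · exact absurd (hsub2 h) hxS
      · exact ⟨h, fun hc => hxS (ihK hc)⟩
    · right
      refine ⟨hxS, fun hc => hxT ?_⟩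
      rw [hTeq]
      exact Finset.mem_union_left _ hc
  have hMcard : (M \ G.labelSet (P₁.take a₁)).card ≤ d := by
    have e1 : M \ G.labelSet (P₁.take a₁) = G.labelSet P₁ \ G.labelSet (P₁.take a₁) := by
      rw [← hA1, Finset.union_sdiff_left]
    have hsub1' : G.labelSet (P₁.take a₁) ⊆ G.labelSet P₁ := hsub1
    rw [e1, Finset.card_sdiff_of_subset hsub1', hw₁, ha₁, hcard₁ _ hKmd]
    exact hwKd
  have hC2card : (G.labelSet P₂ \ G.labelSet (P₂.take a₂)).card ≤ d := by
    rw [Finset.card_sdiff_of_subset hsub2, hw₂, ha₂, hcard₂ _ hKmd]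
    exact hwKd
  have hcardΔ : (symmDiff (G.labelSet R) (G.labelSet P₂)).card ≤ 2*d := by
    refine (Finset.card_le_card hsub).trans ((Finset.card_union_le _ _).trans ?_)
    omega
  have hTeq2 := close _ hTmem hcardΔ
  rw [← hA1]
  apply Finset.union_subset ihK
  have hMsub : M ⊆ G.labelSet R := by
    rw [hTeq]; exact Finset.subset_union_right
  rw [hTeq2] at hMsub
  exact hMsub

end TransitionGraph

namespace TransitionGraph
variable {V E U : Type*} [DecidableEq U] {G : TransitionGraph V E U}

open Classical in
variable (G) in
noncomputable def pathOf (S : Finset U) : List E :=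
  if h : S ∈ G.labelFamily then h.choose else []

lemma pathOf_spec {S : Finset U} (h : S ∈ G.labelFamily) :
    G.Seg G.s G.t (G.pathOf S) ∧ G.labelSet (G.pathOf S) = S := by
  classical
  rw [pathOf, dif_pos h]
  exact h.choose_spec

variable (G) in
noncomputable def sketch (ε : ℝ) (L : ℕ) (S : Finset U) : ℕ × (Fin L → V) :=
  (S.card, fun j => G.cutV G.s ((G.pathOf S).take
    (G.idx (G.pathOf S) (((j : ℕ) + 1) * ⌈ε * S.card / 3⌉₊))))

lemma sketch_injOn {ε : ℝ} (hε : 0 < ε) (hsep : SepProperty ε G.labelFamily) :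
    Set.InjOn (G.sketch ε ⌊3/ε⌋₊) {S | S ∈ G.labelFamily ∧ (6:ℝ) ≤ ε * S.card} := by
  intro S₁ hS₁ S₂ hS₂ hsk
  obtain ⟨hS₁f, h6₁⟩ := hS₁
  obtain ⟨hS₂f, h6₂⟩ := hS₂
  obtain ⟨hseg₁, hlab₁⟩ := pathOf_spec hS₁f
  obtain ⟨hseg₂, hlab₂⟩ := pathOf_spec hS₂f
  have hcardeq : S₁.card = S₂.card := congrArg Prod.fst hsk
  set w := S₁.card with hw
  set d : ℕ := ⌈ε * w / 3⌉₊ with hd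
  set Km : ℕ := (w - 1) / d with hK
  have hεw : (0:ℝ) < ε * w := lt_of_lt_of_le (by norm_num) h6₁
  have hw1 : 1 ≤ w := by
    by_contra h
    have hw0 : w = 0 := by omega
    rw [hw0] at hεw; simp at hεw
  have hd1 : 1 ≤ d := Nat.one_le_ceil_iff.mpr (by positivity)
  have hKd : Km * d ≤ w - 1 := Nat.div_mul_le_self _ _
  -- Km ≤ L
  have hKmL : Km ≤ ⌊3/ε⌋₊ := by
    apply Nat.le_floor
    rw [le_div_iff₀ hε]
    have c1 : (Km : ℝ) * d < (w : ℝ) := by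
      have : Km * d < w := by omega
      exact_mod_cast this
    have c2 : ε * w / 3 ≤ (d:ℝ) := Nat.le_ceil _
    have c3 : (Km:ℝ) * (ε*w/3) ≤ (Km:ℝ) * d :=
      mul_le_mul_of_nonneg_left c2 (Nat.cast_nonneg _)
    have hwpos : (0:ℝ) < w := by exact_mod_cast hw1
    nlinarith
  -- checkpoint equalities
  have hcp : ∀ j, 1 ≤ j → j ≤ Km →
      G.cutV G.s ((G.pathOf S₁).take (G.idx (G.pathOf S₁) (j * d))) =
      G.cutV G.s ((G.pathOf S₂).take (G.idx (G.pathOf S₂) (j * d))) := by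
    intro j hj1 hjK
    have hjL : j - 1 < ⌊3/ε⌋₊ := by omega
    have := congrFun (congrArg Prod.snd hsk) ⟨j-1, hjL⟩
    simp only [sketch] at this
    have hj : (j - 1 + 1) = j := by omega
    rw [hj] at this
    rw [← hcardeq] at this
    exact this
  have hwc₁ : (G.labelSet (G.pathOf S₁)).card = w := by rw [hlab₁]
  have hwc₂ : (G.labelSet (G.pathOf S₂)).card = w := by rw [hlab₂, ← hcardeq]
  have h12 := prefix_incl hε hsep hseg₁ hseg₂ hwc₁ hwc₂ h6₁ hcp
  have h21 := prefix_incl hε hsep hseg₂ hseg₁ hwc₂ hwc₁ h6₁ (fun j a b => (hcp j a b).symm)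
  rw [hlab₁, hlab₂] at h12 h21
  exact le_antisymm h12 h21

end TransitionGraph

namespace TransitionGraph
variable {V E U : Type*} [DecidableEq U] {G : TransitionGraph V E U}

lemma sum_choose_le {m t : ℕ} (hm : 2 ≤ m) (ht : 2 ≤ t) :
    ∑ k ∈ Finset.range (t+1), m.choose k ≤ m ^ t := by
  induction t, ht using Nat.le_induction with
  | base =>
    rw [Finset.sum_range_succ, Finset.sum_range_succ, Finset.sum_range_one]
    obtain ⟨k, rfl⟩ : ∃ k, m = k+2 := ⟨m-2, by omega⟩
    have h2 : (k+2).choose 2 * 2 ≤ (k+2) * (k+2-1) := by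
      rw [Nat.choose_two_right]; exact Nat.div_mul_le_self _ _
    have h3 : k+2-1 = k+1 := by omega
    rw [h3] at h2
    simp only [Nat.choose_zero_right, Nat.choose_one_right]
    nlinarith
  | succ t ht ih =>
    rw [Finset.sum_range_succ]
    have hdesc : m.choose (t+1) * 6 ≤ m^(t+1) := by
      have h1 : Nat.factorial (t+1) * m.choose (t+1) ≤ m^(t+1) := by
        rw [← Nat.descFactorial_eq_factorial_mul_choose]
        exact Nat.descFactorial_le_pow _ _
      have h6 : 6 ≤ Nat.factorial (t+1) := by
        calc 6 = Nat.factorial 3 := rfl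
          _ ≤ _ := Nat.factorial_le (by omega)
      calc m.choose (t+1) * 6 ≤ m.choose (t+1) * Nat.factorial (t+1) :=
            Nat.mul_le_mul_left _ h6
        _ = Nat.factorial (t+1) * m.choose (t+1) := mul_comm _ _
        _ ≤ m^(t+1) := h1
    have hp : m^t * 2 ≤ m^(t+1) := by
      rw [pow_succ]; exact Nat.mul_le_mul_left _ hm
    omega

lemma card_small [Fintype U] (t : ℕ) :
    {S : Finset U | S.card ≤ t}.ncard ≤ ∑ k ∈ Finset.range (t+1), (Fintype.card U).choose k := by
  classical
  have h1 : {S : Finset U | S.card ≤ t} ⊆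
      ↑(Finset.univ.filter (fun S : Finset U => S.card ≤ t)) := by
    intro S hS
    simp only [Finset.coe_filter, Finset.mem_univ, true_and, Set.mem_setOf_eq]
    exact hS
  refine (Set.ncard_le_ncard h1 (Set.toFinite _)).trans ?_
  rw [Set.ncard_coe_finset]
  have h2 : (Finset.univ.filter (fun S : Finset U => S.card ≤ t)) ⊆
      (Finset.range (t+1)).biUnion (fun k => Finset.powersetCard k Finset.univ) := by
    intro S hS
    simp only [Finset.mem_filter, Finset.mem_biUnion, Finset.mem_range,
      Finset.mem_powersetCard] at *
    exact ⟨S.card, by omega, Finset.subset_univ S, rfl⟩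
  refine (Finset.card_le_card h2).trans (Finset.card_biUnion_le.trans ?_)
  apply Finset.sum_le_sum
  intro k _
  rw [Finset.card_powersetCard, Finset.card_univ]

lemma large_count [Fintype V] [Fintype U] {ε : ℝ} (hε : 0 < ε)
    (hsep : SepProperty ε G.labelFamily) (hm : 1 ≤ Fintype.card U) :
    {S | S ∈ G.labelFamily ∧ (6:ℝ) ≤ ε * S.card}.ncard ≤
      Fintype.card U * Fintype.card V ^ (⌊3/ε⌋₊) := by
  classical
  set m := Fintype.card U with hmdef
  set L := ⌊3/ε⌋₊ with hLdef
  have hcard_ge : ∀ S : Finset U, (6:ℝ) ≤ ε * S.card → 1 ≤ S.card := by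
    intro S h
    by_contra hc
    have : S.card = 0 := by omega
    rw [this] at h; norm_num at h
  have hcard_le : ∀ S : Finset U, S.card ≤ m := fun S => Finset.card_le_univ S
  have key := Set.ncard_le_ncard_of_injOn
    (fun S : Finset U => ((⟨min (S.card - 1) (m-1), by omega⟩ : Fin m), (G.sketch ε L S).2))
    (fun S _ => Set.mem_univ _)
    (s := {S | S ∈ G.labelFamily ∧ (6:ℝ) ≤ ε * S.card})
    (t := (Set.univ : Set (Fin m × (Fin L → V))))
    ?_ Set.finite_univ
  · rw [Set.ncard_univ, Nat.card_eq_fintype_card, Fintype.card_prod, Fintype.card_fun,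
      Fintype.card_fin, Fintype.card_fin] at key
    exact key
  · intro S₁ h₁ S₂ h₂ h
    apply sketch_injOn hε hsep h₁ h₂
    have hc1 : 1 ≤ S₁.card := hcard_ge _ h₁.2
    have hc2 : 1 ≤ S₂.card := hcard_ge _ h₂.2
    simp only [Prod.mk.injEq, Fin.mk.injEq] at h
    have hfst : min (S₁.card - 1) (m-1) = min (S₂.card - 1) (m-1) := h.1
    have hle1 : S₁.card ≤ m := hcard_le S₁
    have hle2 : S₂.card ≤ m := hcard_le S₂
    have hcc : S₁.card = S₂.card := by omega
    exact Prod.ext (by simpa [sketch] using hcc) h.2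

end TransitionGraph

open TransitionGraph in
theorem stmt1 {V E U : Type*} [Fintype V] [Fintype E] [Fintype U] [DecidableEq U]
    (G : TransitionGraph V E U) (ε : ℝ) (hε : 0 < ε)
    (hn : 1 ≤ Fintype.card V) (hm : 1 ≤ Fintype.card U)
    (hsep : SepProperty ε G.labelFamily) :
    ((G.labelFamily).ncard : ℝ) ≤
      (Fintype.card U : ℝ) * (Fintype.card V : ℝ) ^ ((3 : ℝ) / ε) +
        (Fintype.card U : ℝ) ^ ((6 : ℝ) / ε) := by
  classical
  have hn1 : (1:ℝ) ≤ (Fintype.card V : ℝ) := by exact_mod_cast hn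
  have hm1 : (1:ℝ) ≤ (Fintype.card U : ℝ) := by exact_mod_cast hm
  have hnp : (1:ℝ) ≤ (Fintype.card V : ℝ) ^ ((3:ℝ)/ε) :=
    Real.one_le_rpow hn1 (by positivity)
  have hmp : (1:ℝ) ≤ (Fintype.card U : ℝ) ^ ((6:ℝ)/ε) :=
    Real.one_le_rpow hm1 (by positivity)
  by_cases hε3 : ε < 3
  · -- main case
    by_cases hm2 : Fintype.card U = 1
    · -- tiny universum
      have h1 : G.labelFamily.ncard ≤ (Set.univ : Set (Finset U)).ncard :=
        Set.ncard_le_ncard (Set.subset_univ _) Set.finite_univ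
      rw [Set.ncard_univ, Nat.card_eq_fintype_card, Fintype.card_finset, hm2] at h1
      have : (G.labelFamily.ncard : ℝ) ≤ 2 := by exact_mod_cast h1
      rw [hm2]
      push_cast
      rw [Real.one_rpow, one_mul]
      linarith
    · have hm2' : 2 ≤ Fintype.card U := by omega
      set t : ℕ := ⌈(6:ℝ)/ε⌉₊ - 1 with ht
      have hceil : (2:ℕ) < ⌈(6:ℝ)/ε⌉₊ := by
        rw [Nat.lt_ceil]
        rw [lt_div_iff₀ hε]
        push_cast
        linarith
      have ht2 : 2 ≤ t := by omega
      -- split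
      set lg := {S | S ∈ G.labelFamily ∧ (6:ℝ) ≤ ε * S.card} with hlg
      set sm := {S : Finset U | S.card ≤ t} with hsm
      have hsplit : G.labelFamily ⊆ lg ∪ sm := by
        intro S hS
        by_cases h : (6:ℝ) ≤ ε * S.card
        · exact Or.inl ⟨hS, h⟩
        · right
          rw [hsm, Set.mem_setOf_eq]
          push_neg at h
          have hlt : (S.card : ℝ) < 6/ε := by
            rw [lt_div_iff₀ hε]; linarith [h]
          have : S.card < ⌈(6:ℝ)/ε⌉₊ := Nat.lt_ceil.mpr hlt
          omega
      have hcount : G.labelFamily.ncard ≤ lg.ncard + sm.ncard :=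
        (Set.ncard_le_ncard hsplit ((Set.toFinite _))).trans (Set.ncard_union_le _ _)
      have hlarge : lg.ncard ≤ Fintype.card U * Fintype.card V ^ (⌊3/ε⌋₊) :=
        large_count hε hsep hm
      have hsmall : sm.ncard ≤ (Fintype.card U)^t :=
        (card_small t).trans (sum_choose_le hm2' ht2)
      -- to reals
      have hlargeR : (lg.ncard : ℝ) ≤
          (Fintype.card U : ℝ) * (Fintype.card V : ℝ) ^ ((3:ℝ)/ε) := by
        have h1 : (lg.ncard : ℝ) ≤
            (Fintype.card U : ℝ) * (Fintype.card V : ℝ) ^ (⌊3/ε⌋₊ : ℕ) := by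
          exact_mod_cast hlarge
        refine h1.trans ?_
        apply mul_le_mul_of_nonneg_left ?_ (by positivity)
        rw [← Real.rpow_natCast]
        exact Real.rpow_le_rpow_of_exponent_le hn1 (Nat.floor_le (by positivity))
      have hsmallR : (sm.ncard : ℝ) ≤ (Fintype.card U : ℝ) ^ ((6:ℝ)/ε) := by
        have h1 : (sm.ncard : ℝ) ≤ (Fintype.card U : ℝ) ^ (t : ℕ) := by
          exact_mod_cast hsmall
        refine h1.trans ?_
        rw [← Real.rpow_natCast]
        apply Real.rpow_le_rpow_of_exponent_le hm1
        have hc := Nat.ceil_lt_add_one (show (0:ℝ) ≤ 6/ε by positivity)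
        have htc : (t:ℝ) = (⌈(6:ℝ)/ε⌉₊ : ℝ) - 1 := by
          rw [ht]
          have : (1:ℕ) ≤ ⌈(6:ℝ)/ε⌉₊ := by omega
          push_cast [Nat.cast_sub this]
          ring
        rw [htc]
        linarith
      have hlgc : (lg.ncard : ℝ) + (sm.ncard : ℝ) ≤ _ + _ := add_le_add hlargeR hsmallR
      have : (G.labelFamily.ncard : ℝ) ≤ (lg.ncard : ℝ) + (sm.ncard : ℝ) := by
        exact_mod_cast hcount
      linarith
  · -- ε ≥ 3
    push_neg at hε3
    by_cases hex : ∃ S ∈ G.labelFamily, (6:ℝ) ≤ ε * S.card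
    · obtain ⟨S0, hS0, h60⟩ := hex
      have hsing : G.labelFamily ⊆ {S0} := by
        intro T hT
        by_contra hne
        have hTn : T ≠ S0 := by simpa using hne
        have hc0 : 1 ≤ S0.card := by
          by_contra hc
          have : S0.card = 0 := by omega
          rw [this] at h60; norm_num at h60
        set X : ℕ := max T.card S0.card with hX
        have hX0 : (S0.card : ℝ) ≤ (X:ℝ) := by exact_mod_cast le_max_right _ _
        have hXT : (T.card : ℝ) ≤ (X:ℝ) := by exact_mod_cast le_max_left _ _
        have hX1 : (1:ℝ) ≤ (X:ℝ) := by
          have : 1 ≤ X := le_trans hc0 (le_max_right _ _)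
          exact_mod_cast this
        have h6' : (6:ℝ) ≤ ε * (X:ℝ) := by
          refine h60.trans (mul_le_mul_of_nonneg_left hX0 hε.le)
        have hlt := hsep T hT S0 hS0 hTn h6'
        have hΔ : (symmDiff T S0).card ≤ T.card + S0.card := by
          refine (Finset.card_le_card ?_).trans (Finset.card_union_le _ _)
          rw [symmDiff_def]
          intro x hx
          simp only [Finset.sup_eq_union, Finset.mem_union, Finset.mem_sdiff] at hx ⊢
          tauto
        have hΔR : ((symmDiff T S0).card : ℝ) ≤ (T.card : ℝ) + (S0.card : ℝ) := by
          exact_mod_cast hΔ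
        nlinarith
      have h1 : G.labelFamily.ncard ≤ 1 := by
        refine (Set.ncard_le_ncard hsing (Set.finite_singleton _)).trans ?_
        simp
      have : (G.labelFamily.ncard : ℝ) ≤ 1 := by exact_mod_cast h1
      nlinarith
    · push_neg at hex
      have hsub : G.labelFamily ⊆ {S : Finset U | S.card ≤ 1} := by
        intro S hS
        rw [Set.mem_setOf_eq]
        have h := hex S hS
        have h2 : (S.card : ℝ) < 2 := by
          nlinarith [Nat.cast_nonneg (α := ℝ) S.card]
        have h3 : S.card < 2 := by exact_mod_cast h2
        omega
      have h1 : G.labelFamily.ncard ≤ 1 + Fintype.card U := by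
        refine (Set.ncard_le_ncard hsub (Set.toFinite _)).trans ?_
        refine (card_small 1).trans ?_
        rw [Finset.sum_range_succ, Finset.sum_range_one]
        simp
      have h1R : (G.labelFamily.ncard : ℝ) ≤ 1 + (Fintype.card U : ℝ) := by
        exact_mod_cast h1
      have hmn : (Fintype.card U : ℝ) ≤
          (Fintype.card U : ℝ) * (Fintype.card V : ℝ) ^ ((3:ℝ)/ε) := by
        nlinarith
      linarith
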